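/- There is no family of functions h_v : {X, Y, Z} → {-1, 1} indexed by v ∈ {1, 2, 3} satisfying simultaneously h_1(X)·h_2(X)·h_3(X) = -1, h_1(X)·h_2(Y)·h_3(Y) = 1, h_1(Y)·h_2(X)·h_3(Y) = 1, and h_1(Y)·h_2(Y)·h_3(X) = 1. -/
import Mathlib

/-- The GHZ/Mermin paradox: no deterministic ±1 assignment of outcomes to the two
settings (`0` = X, `1` = Y) of three parties satisfies the four GHZ constraints. -/
theorem stmt1 : ¬ ∃ h : Fin 3 → Fin 2 → ℤ,
    (∀ (i : Fin 3) (s : Fin 2), h i s = 1 ∨ h i s = -1) ∧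
    h 0 0 * h 1 0 * h 2 0 = -1 ∧
    h 0 0 * h 1 1 * h 2 1 = 1 ∧
    h 0 1 * h 1 0 * h 2 1 = 1 ∧
    h 0 1 * h 1 1 * h 2 0 = 1 := by
  rintro ⟨h, hpm, h1, h2, h3, h4⟩
  rcases hpm 0 0 with a | a <;> rcases hpm 0 1 with b | b <;>
  rcases hpm 1 0 with c | c <;> rcases hpm 1 1 with d | d <;>
  rcases hpm 2 0 with e | e <;> rcases hpm 2 1 with f | f <;>
  simp_all
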